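/- The set of points (r_a, r_b, r_c, r_d) in ℝ^4 satisfying the six inequalities r_a ≥ 0, r_b ≥ 0, r_c ≥ 0, r_d ≥ 0, 2r_a + r_b + 2r_d ≤ 2, and r_a + r_b + r_c + 2r_d ≤ 2 is equal to the convex hull in ℝ^4 of the 6 points (0,0,0,0), (1,0,0,0), (0,0,0,1), (1,0,1,0), (0,2,0,0), (0,0,2,0). -/

import Mathlib

open Matrix

private lemma comb_mem (wO wA wD wP wB wC : ℝ)
    (hO : 0 ≤ wO) (hA : 0 ≤ wA) (hD : 0 ≤ wD) (hP : 0 ≤ wP) (hB : 0 ≤ wB) (hC : 0 ≤ wC)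
    (hs : wO + wA + wD + wP + wB + wC = 1)
    (r : Fin 4 → ℝ)
    (hr : r = wO • ![(0:ℝ),0,0,0] + wA • ![1,0,0,0] + wD • ![0,0,0,1] +
      wP • ![1,0,1,0] + wB • ![0,2,0,0] + wC • ![0,0,2,0]) :
    r ∈ convexHull ℝ ({![0,0,0,0], ![1,0,0,0], ![0,0,0,1],
      ![1,0,1,0], ![0,2,0,0], ![0,0,2,0]} : Set (Fin 4 → ℝ)) := by
  have key : r = ∑ i : Fin 6,
      ![wO, wA, wD, wP, wB, wC] i •
      ![![(0:ℝ),0,0,0], ![1,0,0,0], ![0,0,0,1], ![1,0,1,0], ![0,2,0,0], ![0,0,2,0]] i := by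
    rw [Fin.sum_univ_six]; exact hr
  rw [key]
  apply Convex.sum_mem (convex_convexHull ℝ _)
  · intro i _; fin_cases i <;> assumption
  · rw [Fin.sum_univ_six]; exact hs
  · intro i _
    fin_cases i
    · exact subset_convexHull ℝ _ (Set.mem_insert_iff.mpr (Or.inl rfl))
    · exact subset_convexHull ℝ _ (Set.mem_insert_iff.mpr (Or.inr
        (Set.mem_insert_iff.mpr (Or.inl rfl))))
    · exact subset_convexHull ℝ _ (Set.mem_insert_iff.mpr (Or.inr
        (Set.mem_insert_iff.mpr (Or.inr (Set.mem_insert_iff.mpr (Or.inl rfl))))))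
    · exact subset_convexHull ℝ _ (Set.mem_insert_iff.mpr (Or.inr
        (Set.mem_insert_iff.mpr (Or.inr (Set.mem_insert_iff.mpr (Or.inr
        (Set.mem_insert_iff.mpr (Or.inl rfl))))))))
    · exact subset_convexHull ℝ _ (Set.mem_insert_iff.mpr (Or.inr
        (Set.mem_insert_iff.mpr (Or.inr (Set.mem_insert_iff.mpr (Or.inr
        (Set.mem_insert_iff.mpr (Or.inr (Set.mem_insert_iff.mpr (Or.inl rfl))))))))))
    · exact subset_convexHull ℝ _ (Set.mem_insert_iff.mpr (Or.inr
        (Set.mem_insert_iff.mpr (Or.inr (Set.mem_insert_iff.mpr (Or.inr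
        (Set.mem_insert_iff.mpr (Or.inr (Set.mem_insert_iff.mpr (Or.inr rfl))))))))))

theorem vamos_routing_rate_region :
    {r : Fin 4 → ℝ | 0 ≤ r 0 ∧ 0 ≤ r 1 ∧ 0 ≤ r 2 ∧ 0 ≤ r 3 ∧
      2 * r 0 + r 1 + 2 * r 3 ≤ 2 ∧ r 0 + r 1 + r 2 + 2 * r 3 ≤ 2} =
    convexHull ℝ {![0,0,0,0], ![1,0,0,0], ![0,0,0,1],
      ![1,0,1,0], ![0,2,0,0], ![0,0,2,0]} := by
  apply Set.Subset.antisymm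
  · intro r hr
    obtain ⟨h0, h1, h2, h3, h4, h5⟩ := hr
    rcases le_total (r 2) (r 0) with hc | hc
    · refine comb_mem (1 - (r 0 + r 1 / 2 + r 3)) (r 0 - r 2) (r 3) (r 2) (r 1 / 2) 0
        (by linarith) (by linarith) h3 h2 (by linarith) le_rfl (by ring) r ?_
      funext j
      fin_cases j <;>
        simp [Matrix.cons_val_zero, Matrix.cons_val_one, Matrix.head_cons]
    · refine comb_mem (1 - ((r 0 + r 1 + r 2) / 2 + r 3)) 0 (r 3) (r 0)
        (r 1 / 2) ((r 2 - r 0) / 2)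
        (by linarith) le_rfl h3 h0 (by linarith) (by linarith) (by ring) r ?_
      funext j
      fin_cases j <;>
        simp [Matrix.cons_val_zero, Matrix.cons_val_one, Matrix.head_cons]
  · apply convexHull_min
    · intro x hx
      simp only [Set.mem_insert_iff, Set.mem_singleton_iff] at hx
      rcases hx with h|h|h|h|h|h <;> subst h <;>
        exact ⟨by norm_num [Matrix.cons_val_two, Matrix.cons_val_three, Matrix.vecHead, Matrix.vecTail], by norm_num [Matrix.cons_val_two, Matrix.cons_val_three, Matrix.vecHead, Matrix.vecTail], by norm_num [Matrix.cons_val_two, Matrix.cons_val_three, Matrix.vecHead, Matrix.vecTail], by norm_num [Matrix.cons_val_two, Matrix.cons_val_three, Matrix.vecHead, Matrix.vecTail], by norm_num [Matrix.cons_val_two, Matrix.cons_val_three, Matrix.vecHead, Matrix.vecTail], by norm_num [Matrix.cons_val_two, Matrix.cons_val_three, Matrix.vecHead, Matrix.vecTail]⟩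
    · intro x hx y hy a b ha hb hab
      obtain ⟨hx0, hx1, hx2, hx3, hx4, hx5⟩ := hx
      obtain ⟨hy0, hy1, hy2, hy3, hy4, hy5⟩ := hy
      simp only [Set.mem_setOf_eq, Pi.add_apply, Pi.smul_apply, smul_eq_mul]
      refine ⟨?_, ?_, ?_, ?_, ?_, ?_⟩
      · nlinarith [mul_nonneg ha hx0, mul_nonneg hb hy0]
      · nlinarith [mul_nonneg ha hx1, mul_nonneg hb hy1]
      · nlinarith [mul_nonneg ha hx2, mul_nonneg hb hy2]
      · nlinarith [mul_nonneg ha hx3, mul_nonneg hb hy3]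
      · nlinarith [mul_le_mul_of_nonneg_left hx4 ha, mul_le_mul_of_nonneg_left hy4 hb]
      · nlinarith [mul_le_mul_of_nonneg_left hx5 ha, mul_le_mul_of_nonneg_left hy5 hb]
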